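/- Let V ⊂ ℝ² be open, let p : V → ℝ² be a C² map with component partial derivatives p_u, p_v, p_uu, p_uv, p_vv, and let f : ℝ² → ℝ be C². Define q : V → ℝ³ by q(u,v) = (p(u,v), f(p(u,v))). Then for every (u,v) ∈ V one has [q_u, q_v, q_uu] = [p_u, p_v] · (p_uᵀ · D²f(p) · p_u), [q_u, q_v, q_uv] = [p_u, p_v] · (p_uᵀ · D²f(p) · p_v), and [q_u, q_v, q_vv] = [p_u, p_v] · (p_vᵀ · D²f(p) · p_v), where D²f denotes the Hessian matrix of f. -/

import Mathlib

noncomputable section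

/-- Determinant of the 2×2 matrix with columns `X`, `Y`. -/
def det2 (X Y : ℝ × ℝ) : ℝ := X.1 * Y.2 - X.2 * Y.1

/-- Determinant of the 3×3 matrix with columns `X`, `Y`, `Z`,
where ℝ³ is modelled as `(ℝ × ℝ) × ℝ`. -/
def det3 (X Y Z : (ℝ × ℝ) × ℝ) : ℝ :=
  X.1.1 * (Y.1.2 * Z.2 - Y.2 * Z.1.2)
    - Y.1.1 * (X.1.2 * Z.2 - X.2 * Z.1.2)
    + Z.1.1 * (X.1.2 * Y.2 - X.2 * Y.1.2)

/-- Partial derivative in the first (`u`) direction. -/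
def Du {F : Type*} [NormedAddCommGroup F] [NormedSpace ℝ F] (g : ℝ × ℝ → F) (w : ℝ × ℝ) : F :=
  fderiv ℝ g w (1, 0)

/-- Partial derivative in the second (`v`) direction. -/
def Dv {F : Type*} [NormedAddCommGroup F] [NormedSpace ℝ F] (g : ℝ × ℝ → F) (w : ℝ × ℝ) : F :=
  fderiv ℝ g w (0, 1)

/-- Hessian of `f` at `p`, as a bilinear form: `hess f p a b = aᵀ · D²f(p) · b`. -/
def hess (f : ℝ × ℝ → ℝ) (p : ℝ × ℝ) (a b : ℝ × ℝ) : ℝ :=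
  fderiv ℝ (fderiv ℝ f) p a b

lemma key_alg (g : (ℝ × ℝ) →L[ℝ] ℝ) (A B C : ℝ × ℝ) (h : ℝ) :
    det3 (A, g A) (B, g B) (C, h + g C) = det2 A B * h := by
  have hg : ∀ z : ℝ × ℝ, g z = z.1 * g (1, 0) + z.2 * g (0, 1) := by
    intro z
    have hz : z.1 • ((1:ℝ), (0:ℝ)) + z.2 • ((0:ℝ), (1:ℝ)) = z := by
      ext <;> simp
    conv_lhs => rw [← hz]
    rw [map_add, map_smul, map_smul, smul_eq_mul, smul_eq_mul]
  simp only [det3, det2, hg A, hg B, hg C]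
  ring

lemma q_fderiv {V : Set (ℝ × ℝ)} (hV : IsOpen V)
    {p : ℝ × ℝ → ℝ × ℝ} (hp : ContDiffOn ℝ 2 p V)
    {f : ℝ × ℝ → ℝ} (hf : ContDiff ℝ 2 f) {w : ℝ × ℝ} (hw : w ∈ V) (e : ℝ × ℝ) :
    fderiv ℝ (fun x => (p x, f (p x))) w e
      = (fderiv ℝ p w e, fderiv ℝ f (p w) (fderiv ℝ p w e)) := by
  have hdp : DifferentiableAt ℝ p w :=
    (hp.differentiableOn two_ne_zero).differentiableAt (hV.mem_nhds hw)
  have hdf : DifferentiableAt ℝ f (p w) := (hf.differentiable two_ne_zero).differentiableAt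
  have hq : HasFDerivAt (fun x => (p x, f (p x)))
      ((fderiv ℝ p w).prod ((fderiv ℝ f (p w)).comp (fderiv ℝ p w))) w :=
    HasFDerivAt.prodMk hdp.hasFDerivAt (hdf.hasFDerivAt.comp w hdp.hasFDerivAt)
  rw [hq.fderiv]
  rfl

lemma q_second {V : Set (ℝ × ℝ)} (hV : IsOpen V)
    {p : ℝ × ℝ → ℝ × ℝ} (hp : ContDiffOn ℝ 2 p V)
    {f : ℝ × ℝ → ℝ} (hf : ContDiff ℝ 2 f) {w : ℝ × ℝ} (hw : w ∈ V) (e e' : ℝ × ℝ) :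
    fderiv ℝ (fun x => fderiv ℝ (fun y => (p y, f (p y))) x e') w e
      = (fderiv ℝ (fun x => fderiv ℝ p x e') w e,
          hess f (p w) (fderiv ℝ p w e) (fderiv ℝ p w e')
            + fderiv ℝ f (p w) (fderiv ℝ (fun x => fderiv ℝ p x e') w e)) := by
  have hdp : DifferentiableAt ℝ p w :=
    (hp.differentiableOn two_ne_zero).differentiableAt (hV.mem_nhds hw)
  have hdp' : DifferentiableAt ℝ (fderiv ℝ p) w :=
    (((hp.fderiv_of_isOpen (m := 1) hV (by norm_num)).differentiableOn one_ne_zero).differentiableAt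
      (hV.mem_nhds hw))
  have hdf' : DifferentiableAt ℝ (fderiv ℝ f) (p w) :=
    ((hf.fderiv_right (m := 1) (by norm_num)).differentiable one_ne_zero).differentiableAt
  have hev : (fun x => fderiv ℝ (fun y => (p y, f (p y))) x e')
      =ᶠ[nhds w] (fun x => (fderiv ℝ p x e', fderiv ℝ f (p x) (fderiv ℝ p x e'))) :=
    Filter.eventuallyEq_of_mem (hV.mem_nhds hw) (fun x hx => q_fderiv hV hp hf hx e')
  rw [hev.fderiv_eq]
  have h1 : DifferentiableAt ℝ (fun x => fderiv ℝ p x e') w :=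
    hdp'.clm_apply (differentiableAt_const e')
  have hc : DifferentiableAt ℝ (fun x => fderiv ℝ f (p x)) w := hdf'.comp w hdp
  have h2 : DifferentiableAt ℝ (fun x => fderiv ℝ f (p x) (fderiv ℝ p x e')) w :=
    hc.clm_apply h1
  rw [DifferentiableAt.fderiv_prodMk h1 h2]
  simp only [ContinuousLinearMap.prod_apply]
  refine Prod.ext rfl ?_
  rw [fderiv_clm_apply hc h1]
  have hcomp : fderiv ℝ (fun x => fderiv ℝ f (p x)) w
      = (fderiv ℝ (fderiv ℝ f) (p w)).comp (fderiv ℝ p w) := by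
    rw [show (fun x => fderiv ℝ f (p x)) = (fderiv ℝ f) ∘ p from rfl]
    exact fderiv_comp w hdf' hdp
  rw [hcomp]
  simp only [ContinuousLinearMap.add_apply, ContinuousLinearMap.coe_comp',
    Function.comp_apply, ContinuousLinearMap.flip_apply, ContinuousLinearMap.comp_apply]
  unfold hess
  ring

theorem statement0 (V : Set (ℝ × ℝ)) (hV : IsOpen V)
    (p : ℝ × ℝ → ℝ × ℝ) (hp : ContDiffOn ℝ 2 p V)
    (f : ℝ × ℝ → ℝ) (hf : ContDiff ℝ 2 f) :
    ∀ w ∈ V,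
      det3 (Du (fun x => (p x, f (p x))) w) (Dv (fun x => (p x, f (p x))) w)
          (Du (Du (fun x => (p x, f (p x)))) w)
        = det2 (Du p w) (Dv p w) * hess f (p w) (Du p w) (Du p w) ∧
      det3 (Du (fun x => (p x, f (p x))) w) (Dv (fun x => (p x, f (p x))) w)
          (Dv (Du (fun x => (p x, f (p x)))) w)
        = det2 (Du p w) (Dv p w) * hess f (p w) (Du p w) (Dv p w) ∧
      det3 (Du (fun x => (p x, f (p x))) w) (Dv (fun x => (p x, f (p x))) w)
          (Dv (Dv (fun x => (p x, f (p x)))) w)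
        = det2 (Du p w) (Dv p w) * hess f (p w) (Dv p w) (Dv p w) := by
  intro w hw
  have hu : Du (fun x => (p x, f (p x))) w = (Du p w, fderiv ℝ f (p w) (Du p w)) :=
    q_fderiv hV hp hf hw (1, 0)
  have hv : Dv (fun x => (p x, f (p x))) w = (Dv p w, fderiv ℝ f (p w) (Dv p w)) :=
    q_fderiv hV hp hf hw (0, 1)
  have huu : Du (Du (fun x => (p x, f (p x)))) w
      = (Du (Du p) w, hess f (p w) (Du p w) (Du p w) + fderiv ℝ f (p w) (Du (Du p) w)) :=
    q_second hV hp hf hw (1, 0) (1, 0)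
  have huv : Dv (Du (fun x => (p x, f (p x)))) w
      = (Dv (Du p) w, hess f (p w) (Dv p w) (Du p w) + fderiv ℝ f (p w) (Dv (Du p) w)) :=
    q_second hV hp hf hw (0, 1) (1, 0)
  have hvv : Dv (Dv (fun x => (p x, f (p x)))) w
      = (Dv (Dv p) w, hess f (p w) (Dv p w) (Dv p w) + fderiv ℝ f (p w) (Dv (Dv p) w)) :=
    q_second hV hp hf hw (0, 1) (0, 1)
  have hsymm : hess f (p w) (Dv p w) (Du p w) = hess f (p w) (Du p w) (Dv p w) :=
    (hf.contDiffAt.isSymmSndFDerivAt (by norm_num)) _ _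
  rw [hu, hv, huu, huv, hvv, hsymm]
  exact ⟨key_alg _ _ _ _ _, key_alg _ _ _ _ _, key_alg _ _ _ _ _⟩
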